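/- Let 0 < ρ < 1. There exists a locally univalent meromorphic function f on the open unit disk 𝔻 with f(0) = 0 satisfying f^♯(z) = 1/(1 − ρ²) for every z with |z| = ρ (i.e. a locally univalent map from (𝔻, hyperbolic metric) to the Riemann sphere that is length-preserving on the circle |z| = ρ and fixes 0) if and only if ρ ≤ √2 − 1. -/

import Mathlib

open Complex Metric ComplexConjugate

open scoped Classical in
/-- The spherical derivative of a meromorphic function `f` on the unit disk:
`|f'(z)|/(1+|f(z)|^2)` where `f` is analytic, and `|(1/f)'(z)|/(1+|(1/f)(z)|^2)` at poles. -/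
noncomputable def sphDeriv (f : ℂ → ℂ) (z : ℂ) : ℝ :=
  if AnalyticAt ℂ f z then
    ‖deriv f z‖ / (1 + (‖f z‖) ^ 2)
  else
    ‖deriv (fun w => (f w)⁻¹) z‖ / (1 + (‖(f z)⁻¹‖) ^ 2)

/-- `f` is meromorphic on the open unit disk: at each point it is either analytic,
or has a pole, i.e. `1/f` is analytic there and vanishes there. -/
def MeroOnDisk (f : ℂ → ℂ) : Prop :=
  ∀ z ∈ ball (0 : ℂ) 1,
    AnalyticAt ℂ f z ∨ (AnalyticAt ℂ (fun w => (f w)⁻¹) z ∧ (f z)⁻¹ = 0)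

/-- A meromorphic function on the unit disk is locally univalent: `f'(z) ≠ 0` at every
point where `f` is analytic, and every pole is simple (`1/f` has a simple zero). -/
def LocUnivOnDisk (f : ℂ → ℂ) : Prop :=
  ∀ z ∈ ball (0 : ℂ) 1,
    (AnalyticAt ℂ f z → deriv f z ≠ 0) ∧
    (¬ AnalyticAt ℂ f z → deriv (fun w => (f w)⁻¹) z ≠ 0)

/-- The derivative of an analytic function is analytic. -/
lemma analyticAt_deriv {f : ℂ → ℂ} {z : ℂ} (h : AnalyticAt ℂ f z) :
    AnalyticAt ℂ (deriv f) z := by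
  have := h.eventually_analyticAt
  rw [Filter.eventually_iff_exists_mem] at this
  obtain ⟨s, hs, hall⟩ := this
  obtain ⟨t, hts, hto, hzt⟩ := _root_.mem_nhds_iff.mp hs
  have hOn : AnalyticOnNhd ℂ f t := fun y hy => hall y (hts hy)
  exact hOn.deriv_of_isOpen hto z hzt

/-- If `h` is analytic with a simple zero at `z`, then `h⁻¹` is not analytic at `z`. -/
lemma not_analyticAt_inv {h : ℂ → ℂ} {z : ℂ} (hh : AnalyticAt ℂ h z) (h0 : h z = 0)
    (hd : deriv h z ≠ 0) : ¬ AnalyticAt ℂ (fun w => (h w)⁻¹) z := by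
  intro A
  have hne : ∀ᶠ w in nhdsWithin z {z}ᶜ, h w ≠ 0 := by
    rcases hh.eventually_eq_zero_or_eventually_ne_zero with he | he
    · exfalso
      apply hd
      have : deriv h z = deriv (fun _ : ℂ => (0 : ℂ)) z := Filter.EventuallyEq.deriv_eq he
      simpa using this
    · exact he
  have hc1 : ContinuousAt h z := hh.continuousAt
  have hc2 : ContinuousAt (fun w => (h w)⁻¹) z := A.continuousAt
  have hprod : Filter.Tendsto (fun w => h w * (h w)⁻¹) (nhdsWithin z {z}ᶜ)
      (nhds (h z * (h z)⁻¹)) :=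
    ((hc1.mul hc2).tendsto).mono_left nhdsWithin_le_nhds
  have hone : Filter.Tendsto (fun w => h w * (h w)⁻¹) (nhdsWithin z {z}ᶜ) (nhds 1) := by
    apply Filter.Tendsto.congr' _ tendsto_const_nhds
    filter_upwards [hne] with w hw
    exact (mul_inv_cancel₀ hw).symm
  have : h z * (h z)⁻¹ = 1 := tendsto_nhds_unique hprod hone
  rw [h0] at this
  simpa using this

/-- At each point, either `f` is analytic with nonzero derivative, or `f` has a simple
pole (and `f` takes the junk value `0` there). -/
def GoodPt (f : ℂ → ℂ) (z : ℂ) : Prop :=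
  (AnalyticAt ℂ f z ∧ deriv f z ≠ 0) ∨
    (AnalyticAt ℂ (fun w => (f w)⁻¹) z ∧ f z = 0 ∧
      deriv (fun w => (f w)⁻¹) z ≠ 0 ∧ ¬ AnalyticAt ℂ f z)

lemma goodPt_of_mero {f : ℂ → ℂ} (hm : MeroOnDisk f) (hu : LocUnivOnDisk f) :
    ∀ z ∈ ball (0 : ℂ) 1, GoodPt f z := by
  intro z hz
  rcases hm z hz with hA | ⟨hAi, hi0⟩
  · exact Or.inl ⟨hA, (hu z hz).1 hA⟩
  · by_cases hA : AnalyticAt ℂ f z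
    · exfalso
      exact not_analyticAt_inv hA (inv_eq_zero.mp hi0) ((hu z hz).1 hA) hAi
    · exact Or.inr ⟨hAi, inv_eq_zero.mp hi0, (hu z hz).2 hA, hA⟩

lemma goodPt_inv {f : ℂ → ℂ} {z : ℂ} (hg : GoodPt f z) :
    GoodPt (fun w => (f w)⁻¹) z := by
  have hfun : (fun w => ((f w)⁻¹)⁻¹) = f := by funext w; simp
  rcases hg with ⟨hA, hd⟩ | ⟨hAi, hf0, hdi, hnA⟩
  · by_cases hz : f z = 0
    · refine Or.inr ⟨?_, ?_, ?_, ?_⟩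
      · rw [hfun]; exact hA
      · simp [hz]
      · rw [hfun]; exact hd
      · exact not_analyticAt_inv hA hz hd
    · refine Or.inl ⟨hA.inv hz, ?_⟩
      rw [show (fun w => (f w)⁻¹) = f⁻¹ from rfl, deriv_inv'' hA.differentiableAt hz]
      exact div_ne_zero (neg_ne_zero.mpr hd) (pow_ne_zero _ hz)
  · exact Or.inl ⟨hAi, hdi⟩

/-- The "pre-Schwarzian quotient" `f/f'` is analytic at every good point, including
simple poles of `f`. -/
lemma phi_analytic {f : ℂ → ℂ} {z : ℂ} (hg : GoodPt f z) :
    AnalyticAt ℂ (fun w => f w / deriv f w) z := by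
  rcases hg with ⟨hA, hd⟩ | ⟨hAi, hf0, hdi, hnA⟩
  · exact hA.div (analyticAt_deriv hA) hd
  · set h : ℂ → ℂ := fun w => (f w)⁻¹ with hh
    have hfun : f = fun x => (h x)⁻¹ := by funext x; simp [hh]
    have hg : AnalyticAt ℂ (fun w => -h w / deriv h w) z :=
      (hAi.neg).div (analyticAt_deriv hAi) hdi
    have hev : (fun w => f w / deriv f w) =ᶠ[nhds z] (fun w => -h w / deriv h w) := by
      have ev1 : ∀ᶠ w in nhds z, AnalyticAt ℂ h w := hAi.eventually_analyticAt
      have ev2 : ∀ᶠ w in nhds z, deriv h w ≠ 0 :=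
        (analyticAt_deriv hAi).continuousAt.eventually_ne hdi
      filter_upwards [ev1, ev2] with w hw1 hw2
      by_cases hw : h w = 0
      · have : f w = 0 := by rw [hfun]; simp [hw]
        simp [this, hw]
      · have hder : deriv f w = -deriv h w / h w ^ 2 := by
          rw [hfun]
          exact deriv_inv'' hw1.differentiableAt hw
        have hfw : f w = (h w)⁻¹ := by rw [hfun]
        rw [hder, hfw]
        field_simp
    exact hg.congr hev.symm

/-- Core inequality: if `d/(1+a²) = 1/(1-ρ²)` then `a ≤ (1-ρ²)/2 · d`. -/
lemma key_ineq {ρ a d : ℝ} (h1 : 0 < 1 - ρ ^ 2) (h : d / (1 + a ^ 2) = 1 / (1 - ρ ^ 2)) :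
    a ≤ (1 - ρ ^ 2) / 2 * d := by
  have h2 : (0 : ℝ) < 1 + a ^ 2 := by positivity
  have h3 : d * (1 - ρ ^ 2) = 1 + a ^ 2 := by
    field_simp at h
    linarith
  nlinarith [sq_nonneg (a - 1)]

/-- Main Schwarz-lemma step. -/
lemma main_step {ρ : ℝ} (hρ0 : 0 < ρ) (hρ1 : ρ < 1) {F : ℂ → ℂ}
    (hg : ∀ z ∈ ball (0 : ℂ) 1, GoodPt F z)
    (hA0 : AnalyticAt ℂ F 0) (h00 : F 0 = 0)
    (hB : ∀ z : ℂ, ‖z‖ = ρ → AnalyticAt ℂ F z →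
      ‖F z‖ ≤ (1 - ρ ^ 2) / 2 * ‖deriv F z‖) :
    2 * ρ ≤ 1 - ρ ^ 2 := by
  set φ : ℂ → ℂ := fun w => F w / deriv F w with hφdef
  set M : ℝ := (1 - ρ ^ 2) / 2 with hM
  have hMpos : 0 < M := by
    have : 0 < 1 - ρ ^ 2 := by nlinarith
    positivity
  have hball : ∀ z : ℂ, ‖z‖ ≤ ρ → z ∈ ball (0 : ℂ) 1 := by
    intro z hz
    rw [mem_ball_zero_iff]
    linarith
  have h0mem : (0 : ℂ) ∈ ball (0 : ℂ) 1 := by simp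
  have hd0 : deriv F 0 ≠ 0 := by
    rcases hg 0 h0mem with ⟨_, hd⟩ | ⟨_, _, _, hnA⟩
    · exact hd
    · exact absurd hA0 hnA
  have hφ : ∀ z : ℂ, ‖z‖ ≤ ρ → AnalyticAt ℂ φ z :=
    fun z hz => phi_analytic (hg z (hball z hz))
  have hφ0 : φ 0 = 0 := by simp [hφdef, h00]
  have hdφ0 : deriv φ 0 = 1 := by
    rw [hφdef, show (fun w => F w / deriv F w) = F / deriv F from rfl, deriv_div hA0.differentiableAt (analyticAt_deriv hA0).differentiableAt hd0,
      h00]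
    field_simp
    ring
  -- bound on the sphere
  have hsp : ∀ z ∈ sphere (0 : ℂ) ρ, ‖φ z‖ ≤ M := by
    intro z hz
    rw [mem_sphere_zero_iff_norm] at hz
    have hza : ‖z‖ = ρ := by exact hz
    rcases hg z (hball z hza.le) with ⟨hA, hd⟩ | ⟨_, hf0, _, _⟩
    · have hb := hB z hza hA
      have hdpos : 0 < ‖deriv F z‖ := by
        simpa [AbsoluteValue.pos_iff] using hd
      have : ‖φ z‖ = ‖F z‖ / ‖deriv F z‖ := by
        simp [hφdef, norm_div]
      rw [this, div_le_iff₀ hdpos]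
      exact hb
    · simp [hφdef, hf0, hMpos.le]
  -- maximum modulus on the closed ball
  have hcb : ∀ z ∈ closedBall (0 : ℂ) ρ, ‖φ z‖ ≤ M := by
    have hdc : DiffContOnCl ℂ φ (ball (0 : ℂ) ρ) := by
      constructor
      · intro z hz
        rw [mem_ball_zero_iff] at hz
        exact ((hφ z hz.le).differentiableAt).differentiableWithinAt
      · rw [closure_ball (0 : ℂ) (ne_of_gt hρ0)]
        intro z hz
        rw [mem_closedBall_zero_iff] at hz
        exact ((hφ z hz).continuousAt).continuousWithinAt
    intro z hz
    have hfr : ∀ w ∈ frontier (ball (0 : ℂ) ρ), ‖φ w‖ ≤ M := by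
      rw [frontier_ball (0 : ℂ) (ne_of_gt hρ0)]
      exact hsp
    have hclos : z ∈ closure (ball (0 : ℂ) ρ) := by
      rw [closure_ball (0 : ℂ) (ne_of_gt hρ0)]; exact hz
    exact norm_le_of_forall_mem_frontier_norm_le isBounded_ball hdc hfr hclos
  -- Schwarz lemma
  have hS : ∀ R : ℝ, M < R → ρ ≤ R := by
    intro R hR
    have hmap : Set.MapsTo φ (ball (0 : ℂ) ρ) (ball (φ 0) R) := by
      intro z hz
      rw [hφ0, mem_ball_zero_iff]
      exact lt_of_le_of_lt (hcb z (ball_subset_closedBall hz)) hR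
    have hdiff : DifferentiableOn ℂ φ (ball (0 : ℂ) ρ) := by
      intro z hz
      rw [mem_ball_zero_iff] at hz
      exact ((hφ z hz.le).differentiableAt).differentiableWithinAt
    have := norm_deriv_le_div_of_mapsTo_ball hdiff (hmap.mono_right ball_subset_closedBall) hρ0
    rw [hdφ0] at this
    have h1 : (1 : ℝ) ≤ R / ρ := by simpa using this
    rw [le_div_iff₀ hρ0] at h1
    linarith
  have hρM : ρ ≤ M := by
    by_contra hlt
    push_neg at hlt
    have := hS ((M + ρ) / 2) (by linarith)
    linarith
  rw [hM] at hρM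
  linarith

/-- There exists a locally univalent meromorphic map of `(𝔻, hyperbolic)` to the sphere
fixing `0` which is length-preserving on the circle `|z| = ρ` iff `ρ ≤ √2 - 1`. -/
theorem exists_length_preserving_iff (ρ : ℝ) (hρ0 : 0 < ρ) (hρ1 : ρ < 1) :
    (∃ f : ℂ → ℂ, MeroOnDisk f ∧ LocUnivOnDisk f ∧ f 0 = 0 ∧
      ∀ z : ℂ, ‖z‖ = ρ → sphDeriv f z = 1 / (1 - ρ ^ 2)) ↔
      ρ ≤ Real.sqrt 2 - 1 := by
  have h1 : 0 < 1 - ρ ^ 2 := by nlinarith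
  have hs2 : Real.sqrt 2 ^ 2 = 2 := Real.sq_sqrt (by norm_num)
  have hs2n : 0 ≤ Real.sqrt 2 := Real.sqrt_nonneg 2
  constructor
  · rintro ⟨f, hm, hu, h0, hs⟩
    have hgood := goodPt_of_mero hm hu
    have h0mem : (0 : ℂ) ∈ ball (0 : ℂ) 1 := by simp
    -- the pointwise circle bound for an analytic point of f
    have hBf : ∀ z : ℂ, ‖z‖ = ρ → AnalyticAt ℂ f z →
        ‖f z‖ ≤ (1 - ρ ^ 2) / 2 * ‖deriv f z‖ := by
      intro z hz hA
      have hsz := hs z hz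
      rw [sphDeriv, if_pos hA] at hsz
      exact key_ineq h1 hsz
    have hkey : 2 * ρ ≤ 1 - ρ ^ 2 := by
      by_cases hA0 : AnalyticAt ℂ f 0
      · exact main_step hρ0 hρ1 hgood hA0 h0 hBf
      · -- f has a pole at 0; use F = 1/f
        set F : ℂ → ℂ := fun w => (f w)⁻¹ with hF
        have hgF : ∀ z ∈ ball (0 : ℂ) 1, GoodPt F z :=
          fun z hz => goodPt_inv (hgood z hz)
        have hA0F : AnalyticAt ℂ F 0 := by
          rcases hgood 0 h0mem with ⟨hA, _⟩ | ⟨hAi, _, _, _⟩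
          · exact absurd hA hA0
          · exact hAi
        have h00F : F 0 = 0 := by simp [hF, h0]
        have hBF : ∀ z : ℂ, ‖z‖ = ρ → AnalyticAt ℂ F z →
            ‖F z‖ ≤ (1 - ρ ^ 2) / 2 * ‖deriv F z‖ := by
          intro z hz hAF
          have hzball : z ∈ ball (0 : ℂ) 1 := by
            rw [mem_ball_zero_iff, hz]; exact hρ1
          rcases hgood z hzball with ⟨hA, hd⟩ | ⟨_, hf0, _, _⟩
          · by_cases hfz : f z = 0
            · exact absurd hAF (not_analyticAt_inv hA hfz hd)
            · have hsz := hs z hz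
              rw [sphDeriv, if_pos hA] at hsz
              have hkey2 : ‖f z‖ ≤ (1 - ρ ^ 2) / 2 * ‖deriv f z‖ :=
                key_ineq h1 hsz
              have hderF : deriv F z = -deriv f z / f z ^ 2 :=
                deriv_inv'' hA.differentiableAt hfz
              have ha : 0 < ‖f z‖ := by
                simpa [AbsoluteValue.pos_iff] using hfz
              have hFz : ‖F z‖ = (‖f z‖)⁻¹ := by
                simp [hF, norm_inv]
              have hFd : ‖deriv F z‖
                  = ‖deriv f z‖ / ‖f z‖ ^ 2 := by
                rw [hderF]
                simp [norm_div, norm_pow]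
              rw [hFz, hFd]
              rw [show (‖f z‖)⁻¹ = ‖f z‖ / ‖f z‖ ^ 2 by
                field_simp [sq]]
              rw [show (1 - ρ ^ 2) / 2 * (‖deriv f z‖ / ‖f z‖ ^ 2)
                  = ((1 - ρ ^ 2) / 2 * ‖deriv f z‖) / ‖f z‖ ^ 2 by
                ring]
              gcongr
          · -- f has a pole at z, so F z = 0
            have : F z = 0 := by simp [hF, hf0]
            rw [this]
            simp
            positivity
        exact main_step hρ0 hρ1 hgF hA0F h00F hBF
    -- conclude ρ ≤ √2 - 1
    nlinarith [sq_nonneg (ρ + 1 - Real.sqrt 2)]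
  · -- construction: f z = c z
    intro hρ
    have hd2 : 2 * ρ ≤ 1 - ρ ^ 2 := by nlinarith
    have hD : 0 ≤ (1 - ρ ^ 2) ^ 2 - 4 * ρ ^ 2 := by nlinarith
    set s : ℝ := Real.sqrt ((1 - ρ ^ 2) ^ 2 - 4 * ρ ^ 2) with hsdef
    have hs_sq : s ^ 2 = (1 - ρ ^ 2) ^ 2 - 4 * ρ ^ 2 := Real.sq_sqrt hD
    have hs_nn : 0 ≤ s := Real.sqrt_nonneg _
    set c : ℝ := ((1 - ρ ^ 2) + s) / (2 * ρ ^ 2) with hcdef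
    have hρ2 : 0 < ρ ^ 2 := by positivity
    have hcpos : 0 < c := by
      apply div_pos
      · linarith
      · linarith
    have hquad : ρ ^ 2 * c ^ 2 + 1 = (1 - ρ ^ 2) * c := by
      rw [hcdef]
      field_simp
      nlinarith [hs_sq]
    refine ⟨fun z => (c : ℂ) * z, ?_, ?_, by simp, ?_⟩
    · intro z _
      exact Or.inl (analyticAt_const.mul analyticAt_id)
    · intro z _
      have hA : AnalyticAt ℂ (fun z : ℂ => (c : ℂ) * z) z :=
        analyticAt_const.mul analyticAt_id
      constructor
      · intro _
        have hda : HasDerivAt (fun z : ℂ => (c : ℂ) * z) ((c : ℂ)) z := by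
          simpa using (hasDerivAt_id z).const_mul ((c : ℂ))
        rw [hda.deriv]
        exact_mod_cast Complex.ofReal_ne_zero.mpr (ne_of_gt hcpos)
      · intro hnA
        exact absurd hA hnA
    · intro z hz
      have hA : AnalyticAt ℂ (fun z : ℂ => (c : ℂ) * z) z :=
        analyticAt_const.mul analyticAt_id
      rw [sphDeriv, if_pos hA]
      have hda : HasDerivAt (fun z : ℂ => (c : ℂ) * z) ((c : ℂ)) z := by
        simpa using (hasDerivAt_id z).const_mul ((c : ℂ))
      rw [hda.deriv]
      have habs : ‖(c : ℂ) * z‖ = c * ρ := by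
        rw [norm_mul, Complex.norm_real, Real.norm_eq_abs, hz, abs_of_pos hcpos]
      have habc : ‖(c : ℂ)‖ = c := by
        rw [Complex.norm_real, Real.norm_eq_abs, abs_of_pos hcpos]
      rw [habs, habc]
      rw [div_eq_div_iff (by positivity) (by positivity)]
      nlinarith [hquad]
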